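/- Let Φ : (ℂ × ℝ) \ {0} → ℂ × ℝ be the inversion Φ(ξ, s) = (ξ/(|ξ|² + s²), s/(|ξ|² + s²)). Let ζ₀ ∈ ℂ with ζ₀ ≠ 0 and set ζ₀′ = ζ₀/|ζ₀|². Then for every (ζ, w) ∈ ℂ × ℝ with w > 0, writing (ζ′, w′) = Φ(ζ, w), the real Fréchet derivative of Φ at (ζ′, w′) applied to the vector (ζ′ − ζ₀′, w′) equals (−w²/conj(ζ₀) + ζ²/ζ₀ − ζ, 2w·Re(ζ/ζ₀) − w). -/

import Mathlib

open Complex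

lemma phi_fderiv_apply (p : ℂ × ℝ) (hp : Complex.normSq p.1 + p.2 ^ 2 ≠ 0) (v : ℂ × ℝ) :
    fderiv ℝ (fun q : ℂ × ℝ => (q.1 / ((Complex.normSq q.1 + q.2 ^ 2 : ℝ) : ℂ),
      q.2 / (Complex.normSq q.1 + q.2 ^ 2))) p v =
      (v.1 / ((Complex.normSq p.1 + p.2 ^ 2 : ℝ) : ℂ)
          - ((2 * (p.1.re * v.1.re + p.1.im * v.1.im + p.2 * v.2)
              / (Complex.normSq p.1 + p.2 ^ 2) ^ 2 : ℝ) : ℂ) * p.1,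
        v.2 / (Complex.normSq p.1 + p.2 ^ 2)
          - 2 * (p.1.re * v.1.re + p.1.im * v.1.im + p.2 * v.2)
              / (Complex.normSq p.1 + p.2 ^ 2) ^ 2 * p.2) := by
  have hre : HasFDerivAt (fun q : ℂ × ℝ => q.1.re)
      (Complex.reCLM.comp (ContinuousLinearMap.fst ℝ ℂ ℝ)) p :=
    (Complex.reCLM.comp (ContinuousLinearMap.fst ℝ ℂ ℝ)).hasFDerivAt
  have him : HasFDerivAt (fun q : ℂ × ℝ => q.1.im)
      (Complex.imCLM.comp (ContinuousLinearMap.fst ℝ ℂ ℝ)) p :=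
    (Complex.imCLM.comp (ContinuousLinearMap.fst ℝ ℂ ℝ)).hasFDerivAt
  have hsnd : HasFDerivAt (fun q : ℂ × ℝ => q.2) (ContinuousLinearMap.snd ℝ ℂ ℝ) p :=
    (ContinuousLinearMap.snd ℝ ℂ ℝ).hasFDerivAt
  have hfst : HasFDerivAt (fun q : ℂ × ℝ => q.1) (ContinuousLinearMap.fst ℝ ℂ ℝ) p :=
    (ContinuousLinearMap.fst ℝ ℂ ℝ).hasFDerivAt
  have hg := (((hre.mul hre).add (him.mul him)).add (hsnd.mul hsnd)).congr_of_eventuallyEq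
    (Filter.Eventually.of_forall (fun q : ℂ × ℝ => by
      show Complex.normSq q.1 + q.2 ^ 2 = _
      simp [Complex.normSq_apply]; ring))
  have hginv := (hasFDerivAt_inv hp).comp p hg
  have hgC := Complex.ofRealCLM.hasFDerivAt.comp p hginv
  have h1 := hfst.mul hgC
  have h2 := hsnd.mul hginv
  have hL := HasFDerivAt.prodMk h1 h2
  have heq : (fun q : ℂ × ℝ => (q.1 / ((Complex.normSq q.1 + q.2 ^ 2 : ℝ) : ℂ),
      q.2 / (Complex.normSq q.1 + q.2 ^ 2)))
      = (fun q : ℂ × ℝ => (q.1 * ((((Complex.normSq q.1 + q.2 ^ 2 : ℝ))⁻¹ : ℝ) : ℂ),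
        q.2 * (Complex.normSq q.1 + q.2 ^ 2)⁻¹)) := by
    funext q; simp [div_eq_mul_inv]
  simp only [Function.comp_def, Complex.ofRealCLM_apply, Pi.mul_apply] at hL
  rw [heq, hL.fderiv]
  simp [ContinuousLinearMap.prod_apply, Prod.ext_iff]
  constructor
  · ring
  · ring

/-- Lemma (killingtrans): the pushforward under the inversion
`Φ(ξ,s) = (ξ,s)/(|ξ|²+s²)` of the Killing field `Z(ξ,s) = (ξ − ζ₀′, s)` of the
translation along the geodesic `(ζ₀′, ∞)` is the Killing field of the
translation along `(ζ₀, 0)`: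
`dΦ_{Φ(P)}(Z(Φ(P))) = (−w²/ζ̄₀ + ζ²/ζ₀ − ζ, 2w·Re(ζ/ζ₀) − w)` for `P = (ζ,w)`, `w > 0`. -/
theorem stmt5 (Φ : ℂ × ℝ → ℂ × ℝ)
    (hΦ : ∀ p : ℂ × ℝ, Φ p = (p.1 / ((Complex.normSq p.1 + p.2 ^ 2 : ℝ) : ℂ),
      p.2 / (Complex.normSq p.1 + p.2 ^ 2)))
    (ζ₀ : ℂ) (hζ₀ : ζ₀ ≠ 0) (ζ₀' : ℂ) (hζ₀' : ζ₀' = ζ₀ / ((Complex.normSq ζ₀ : ℝ) : ℂ))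
    (ζ : ℂ) (w : ℝ) (hw : 0 < w) :
    fderiv ℝ Φ (Φ (ζ, w)) (((Φ (ζ, w)).1 - ζ₀', (Φ (ζ, w)).2)) =
      (- (w : ℂ) ^ 2 / (starRingEnd ℂ) ζ₀ + ζ ^ 2 / ζ₀ - ζ,
        2 * w * (ζ / ζ₀).re - w) := by
  have hΦfun : Φ = (fun q : ℂ × ℝ => (q.1 / ((Complex.normSq q.1 + q.2 ^ 2 : ℝ) : ℂ),
      q.2 / (Complex.normSq q.1 + q.2 ^ 2))) := funext hΦ
  set R : ℝ := Complex.normSq ζ + w ^ 2 with hRdef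
  have hR0 : 0 < R := add_pos_of_nonneg_of_pos (Complex.normSq_nonneg ζ) (pow_pos hw 2)
  have hRne : R ≠ 0 := ne_of_gt hR0
  have hRne' : Complex.normSq ζ + w ^ 2 ≠ 0 := by rw [← hRdef]; exact hRne
  have hz0 : Complex.normSq ζ₀ ≠ 0 := fun h => hζ₀ (Complex.normSq_eq_zero.1 h)
  have hq : Φ (ζ, w) = (ζ / ((R : ℝ) : ℂ), w / R) := by rw [hΦ]
  have hp : Complex.normSq (ζ / ((R : ℝ) : ℂ)) + (w / R) ^ 2 ≠ 0 :=
    ne_of_gt (add_pos_of_nonneg_of_pos (Complex.normSq_nonneg _)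
      (pow_pos (div_pos hw hR0) 2))
  rw [hq, hΦfun, phi_fderiv_apply _ hp]
  have hρ : Complex.normSq (ζ / ((R : ℝ) : ℂ)) + (w / R) ^ 2 = R⁻¹ := by
    rw [Complex.normSq_div, Complex.normSq_ofReal, hRdef]
    field_simp
  rw [hρ]
  have hS2 : 2 * ((ζ / ((R : ℝ) : ℂ)).re * ((ζ / ((R : ℝ) : ℂ)) - ζ₀').re
        + (ζ / ((R : ℝ) : ℂ)).im * ((ζ / ((R : ℝ) : ℂ)) - ζ₀').im
        + w / R * (w / R)) / (R⁻¹) ^ 2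
      = (2 - 2 * (ζ / ζ₀).re) * R := by
    simp only [hζ₀', Complex.sub_re, Complex.sub_im, Complex.div_ofReal_re,
      Complex.div_ofReal_im, Complex.div_re, Complex.div_im,
      Complex.normSq_ofReal, Complex.ofReal_re, Complex.ofReal_im]
    rw [hRdef]
    simp only [Complex.normSq_apply] at hz0 hRne' ⊢
    have hz0' : ζ₀.re ^ 2 + ζ₀.im ^ 2 ≠ 0 := by rw [sq, sq]; exact hz0
    field_simp
    ring
  rw [hS2]
  have hcz0 : (starRingEnd ℂ) ζ₀ ≠ 0 := by simpa using hζ₀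
  have hRC : ((R : ℝ) : ℂ) = ζ * (starRingEnd ℂ) ζ + (w : ℂ) ^ 2 := by
    rw [hRdef]; push_cast [Complex.mul_conj]; ring
  have hRCne : ζ * (starRingEnd ℂ) ζ + (w : ℂ) ^ 2 ≠ 0 := by
    rw [← hRC]; exact_mod_cast Complex.ofReal_ne_zero.2 hRne
  have he : (((ζ / ζ₀).re : ℝ) : ℂ) = (ζ / ζ₀ + (starRingEnd ℂ) ζ / (starRingEnd ℂ) ζ₀) / 2 := by
    rw [← map_div₀, Complex.add_conj]
    push_cast
    ring
  have hζ₀'C : ζ₀' = ((starRingEnd ℂ) ζ₀)⁻¹ := by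
    rw [hζ₀', ← Complex.mul_conj]
    field_simp
  rw [Prod.ext_iff]
  constructor
  · show (ζ / ((R : ℝ) : ℂ) - ζ₀') / ((R⁻¹ : ℝ) : ℂ)
        - (((2 - 2 * (ζ / ζ₀).re) * R : ℝ) : ℂ) * (ζ / ((R : ℝ) : ℂ)) = _
    push_cast
    rw [hζ₀'C, he, hRC]
    have e1 : (ζ / (ζ * (starRingEnd ℂ) ζ + (w : ℂ) ^ 2) - ((starRingEnd ℂ) ζ₀)⁻¹)
        / (ζ * (starRingEnd ℂ) ζ + (w : ℂ) ^ 2)⁻¹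
        = ζ - (ζ * (starRingEnd ℂ) ζ + (w : ℂ) ^ 2) / (starRingEnd ℂ) ζ₀ := by
      rw [div_inv_eq_mul, sub_mul, div_mul_cancel₀ _ hRCne, inv_mul_eq_div]
    have e2 : (2 - 2 * ((ζ / ζ₀ + (starRingEnd ℂ) ζ / (starRingEnd ℂ) ζ₀) / 2))
        * (ζ * (starRingEnd ℂ) ζ + (w : ℂ) ^ 2) * (ζ / (ζ * (starRingEnd ℂ) ζ + (w : ℂ) ^ 2))
        = (2 - 2 * ((ζ / ζ₀ + (starRingEnd ℂ) ζ / (starRingEnd ℂ) ζ₀) / 2)) * ζ := by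
      rw [mul_assoc, mul_comm (ζ * (starRingEnd ℂ) ζ + (w : ℂ) ^ 2),
        div_mul_cancel₀ _ hRCne]
    rw [e1, e2]
    field_simp [hζ₀, hcz0]
    ring
  · show w / R / R⁻¹ - (2 - 2 * (ζ / ζ₀).re) * R * (w / R) = _
    field_simp
    ring
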